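/- Let R = C⁰_{b,D,<∞}(D) for D = [a,b] with a < b. Then every maximal ideal of R is real: for every maximal ideal m of R, every n ∈ ℕ and all f₁, …, f_n ∈ R, if f₁² + ⋯ + f_n² ∈ m then f_i ∈ m for all i = 1, …, n. -/

import Mathlib

open Set Filter Topology

def pcAlg (W : Type*) [TopologicalSpace W] : Subalgebra ℝ (W → ℝ) where
  carrier := {f | (∃ C, ∀ x, |f x| ≤ C) ∧ {x | ¬ ContinuousAt f x}.Finite}
  add_mem' := by
    rintro f g ⟨⟨Cf, hCf⟩, hf⟩ ⟨⟨Cg, hCg⟩, hg⟩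
    refine ⟨⟨Cf + Cg, fun x => ?_⟩, (hf.union hg).subset fun x hx => ?_⟩
    · exact (abs_add_le _ _).trans (add_le_add (hCf x) (hCg x))
    · simp only [mem_union, mem_setOf_eq] at hx ⊢
      by_contra h
      push_neg at h
      exact hx (h.1.add h.2)
  mul_mem' := by
    rintro f g ⟨⟨Cf, hCf⟩, hf⟩ ⟨⟨Cg, hCg⟩, hg⟩
    refine ⟨⟨max Cf 0 * max Cg 0, fun x => ?_⟩, (hf.union hg).subset fun x hx => ?_⟩
    · rw [Pi.mul_apply, abs_mul]
      exact mul_le_mul ((hCf x).trans (le_max_left _ _)) ((hCg x).trans (le_max_left _ _))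
        (abs_nonneg _) (le_max_right _ _)
    · simp only [mem_union, mem_setOf_eq] at hx ⊢
      by_contra h
      push_neg at h
      exact hx (h.1.mul h.2)
  algebraMap_mem' := fun r => by
    refine ⟨⟨|r|, fun x => le_of_eq rfl⟩, Set.finite_empty.subset fun x hx => ?_⟩
    exact absurd continuousAt_const hx

lemma pcAlg_isUnit {W : Type*} [TopologicalSpace W] (u : ↥(pcAlg W))
    (hu : ∀ x, 1 ≤ (u : W → ℝ) x) : IsUnit u := by
  have hne : ∀ x, (u : W → ℝ) x ≠ 0 := fun x => (lt_of_lt_of_le one_pos (hu x)).ne'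
  have hmem : (fun x => ((u : W → ℝ) x)⁻¹) ∈ pcAlg W := by
    constructor
    · exact ⟨1, fun x => by
        rw [abs_inv]
        exact inv_le_one_of_one_le₀ ((hu x).trans (le_abs_self _))⟩
    · refine u.2.2.subset fun x hx => ?_
      simp only [mem_setOf_eq] at hx ⊢
      exact fun h => hx (h.inv₀ (hne x))
  refine IsUnit.of_mul_eq_one (a := u) ⟨_, hmem⟩ ?_
  exact Subtype.ext (funext fun x => mul_inv_cancel₀ (hne x))

/-- Every maximal ideal of `R = C⁰_{b,D,<∞}(D)` is real: if a finite sum of squares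
lies in a maximal ideal, then so does each of the elements being squared. -/
theorem maximalIdeal_pcAlg_isReal (a b : ℝ) (hab : a < b)
    (m : Ideal ↥(pcAlg ↥(Set.Icc a b))) (hm : m.IsMaximal)
    (n : ℕ) (f : Fin n → ↥(pcAlg ↥(Set.Icc a b)))
    (hsum : (∑ i, f i ^ 2) ∈ m) :
    ∀ i, f i ∈ m := by
  intro i
  by_contra hfi
  obtain ⟨g, z, hz, hgz⟩ := hm.exists_inv hfi
  set u : ↥(pcAlg ↥(Set.Icc a b)) := 1 + ∑ j ∈ Finset.univ.erase i, (g * f j) ^ 2 with hu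
  have key : u = g ^ 2 * (∑ j, f j ^ 2) + (2 * z - z ^ 2) := by
    have h3 : (g * f i) ^ 2 + ∑ j ∈ Finset.univ.erase i, (g * f j) ^ 2 = ∑ j, (g * f j) ^ 2 :=
      Finset.add_sum_erase Finset.univ (fun j => (g * f j) ^ 2) (Finset.mem_univ i)
    have h2 : g ^ 2 * (∑ j, f j ^ 2) = ∑ j, (g * f j) ^ 2 := by
      rw [Finset.mul_sum]; exact Finset.sum_congr rfl fun j _ => by ring_nf
    rw [hu, h2, ← h3, eq_sub_of_add_eq hgz]
    ring
  have humem : u ∈ m := by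
    rw [key]
    refine Ideal.add_mem _ (Ideal.mul_mem_left _ _ hsum) (Ideal.sub_mem _ (Ideal.mul_mem_left _ _ hz) ?_)
    rw [sq]; exact Ideal.mul_mem_left _ _ hz
  have hunit : IsUnit u := by
    apply pcAlg_isUnit
    intro x
    have hcoe : (u : ↥(Set.Icc a b) → ℝ) x
        = 1 + ∑ j ∈ Finset.univ.erase i, (((g * f j : ↥(pcAlg ↥(Set.Icc a b))) : ↥(Set.Icc a b) → ℝ) x) ^ 2 := by
      rw [hu]
      push_cast
      simp
    rw [hcoe]
    have : (0:ℝ) ≤ ∑ j ∈ Finset.univ.erase i, (((g * f j : ↥(pcAlg ↥(Set.Icc a b))) : ↥(Set.Icc a b) → ℝ) x) ^ 2 :=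
      Finset.sum_nonneg fun j _ => sq_nonneg _
    linarith
  exact hm.ne_top (m.eq_top_of_isUnit_mem humem hunit)
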